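/- Let X be a completely regular Hausdorff space and A ⊆ X an open subset. If a net (f_α) in C(X) increases to f (i.e., f_α ↗ f, meaning f is the supremum of the increasing net in C(X)), then the restrictions satisfy f_α|_A ↗ f|_A in C(A). -/

import Mathlib

universe u

/-- if a net increases to its supremum f in C(X) then the restrictions
to an open set A increase to the restriction of f in C(A). -/
theorem stmt4 {X : Type u} [TopologicalSpace X] [CompletelyRegularSpace X] [T2Space X]
    (A : Set X) (hA : IsOpen A)
    {ι : Type u} [Preorder ι] [IsDirected ι (· ≤ ·)]
    (f_ : ι → C(X, ℝ)) (hmono : Monotone f_) (f : C(X, ℝ))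
    (hsup : IsLUB (Set.range f_) f) :
    IsLUB (Set.range fun i => (f_ i).restrict A) (f.restrict A) := by
  have hub : ∀ i, f_ i ≤ f := fun i => hsup.1 (Set.mem_range_self i)
  constructor
  · rintro _ ⟨i, rfl⟩
    intro a
    exact hub i a
  · intro g hg
    have hgub : ∀ i, (f_ i).restrict A ≤ g := fun i => hg (Set.mem_range_self i)
    intro a
    by_contra hlt
    push_neg at hlt
    -- hlt : g a < f a
    set δ : ℝ := (f a - g a) / 2 with hδ
    have hδpos : 0 < δ := by
      have : (0:ℝ) < f a - g a := by simpa [ContinuousMap.restrict_apply] using sub_pos.mpr hlt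
      positivity
    -- the open set U in X
    set S : Set A := {b : A | g b < f b - δ} with hS
    have hSopen : IsOpen S := by
      apply isOpen_lt g.continuous
      exact ((f.restrict A).continuous.sub continuous_const)
    set U : Set X := Subtype.val '' S with hU
    have hUopen : IsOpen U := hA.isOpenMap_subtype_val S hSopen
    have haU : (a : X) ∈ U := by
      refine ⟨a, ?_, rfl⟩
      simp only [hS, Set.mem_setOf_eq]
      have : g a < f a := hlt
      linarith [hδpos, hδ]
    obtain ⟨φ, hφc, hφa, hφ1⟩ :=
      CompletelyRegularSpace.completely_regular (a : X) Uᶜ hUopen.isClosed_compl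
        (by simpa using haU)
    -- ψ = f - δ * (1 - φ)
    set ψ : C(X, ℝ) := ⟨fun y => f y - δ * (1 - (φ y : ℝ)),
      f.continuous.sub (continuous_const.mul
        (continuous_const.sub (continuous_subtype_val.comp hφc)))⟩ with hψ
    have hψub : ∀ i, f_ i ≤ ψ := by
      intro i y
      by_cases hy : y ∈ U
      · obtain ⟨b, hbS, rfl⟩ := hy
        have h1 : f_ i ↑b ≤ g b := hgub i b
        have h2 : g b < f ↑b - δ := hbS
        have h3 : δ * (1 - (φ ↑b : ℝ)) ≤ δ := by
          have h0 : (0:ℝ) ≤ (φ ↑b : ℝ) := (φ ↑b).2.1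
          nlinarith [hδpos]
        show (f_ i) ↑b ≤ f ↑b - δ * (1 - (φ ↑b : ℝ))
        linarith
      · have : φ y = 1 := hφ1 hy
        show (f_ i) y ≤ f y - δ * (1 - (φ y : ℝ))
        rw [this]
        simpa using hub i y
    have : f ≤ ψ := hsup.2 (by rintro _ ⟨i, rfl⟩; exact hψub i)
    have := this (a : X)
    simp only [hψ, ContinuousMap.coe_mk, hφa] at this
    norm_num at this
    linarith
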